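/- Let s₁ ≥ s₂ ≥ 0 and d₁, d₂ ≥ 0 be the channel gain magnitudes of the two-relay Gaussian diamond network (s_i = |h_{S A_i}|, d_i = |h_{A_i D}|). Define the partial-decode-and-forward rate R_PDF as follows: if s₁ ≤ d₁ then R_PDF = log₂(1+s₁²); if s₁ > d₁ then, with α = d₁²/s₁², R_PDF = min( log₂( (1+s₂²)(1+d₁²)/(α·s₂²+1) ), log₂(1+d₁²+d₂²) ). Then the cut-set upper bound C̄ = min{ log₂(1+s₁²+s₂²), log₂(1+(d₁+d₂)²), log₂(1+s₁²)+log₂(1+d₂²), log₂(1+s₂²)+log₂(1+d₁²) } satisfies C̄ ≤ R_PDF + 1. -/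

import Mathlib

lemma logb_le_add_one' {x y : ℝ} (hx : 0 < x) (hy : 0 < y) (h : x ≤ 2 * y) :
    Real.logb 2 x ≤ Real.logb 2 y + 1 := by
  have h2 : Real.logb 2 (2 * y) = 1 + Real.logb 2 y := by
    rw [Real.logb_mul (by norm_num) (ne_of_gt hy), Real.logb_self_eq_one (by norm_num)]
  calc Real.logb 2 x ≤ Real.logb 2 (2 * y) :=
        Real.logb_le_logb_of_le (by norm_num) hx h
    _ = Real.logb 2 y + 1 := by rw [h2]; ring

/-- Partial-decode-and-forward achieves within 1 bit of the cut-set upper bound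
of the two-relay Gaussian diamond network, for all channel gain magnitudes
`s₁ = |h_{SA₁}| ≥ s₂ = |h_{SA₂}| ≥ 0` and `d₁ = |h_{A₁D}|, d₂ = |h_{A₂D}| ≥ 0`. -/
theorem partial_decode_forward_within_one_bit (s₁ s₂ d₁ d₂ : ℝ)
    (hs : s₂ ≤ s₁) (hs₂ : 0 ≤ s₂) (hd₁ : 0 ≤ d₁) (hd₂ : 0 ≤ d₂) :
    min (min (Real.logb 2 (1 + s₁ ^ 2 + s₂ ^ 2))
             (Real.logb 2 (1 + (d₁ + d₂) ^ 2)))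
        (min (Real.logb 2 (1 + s₁ ^ 2) + Real.logb 2 (1 + d₂ ^ 2))
             (Real.logb 2 (1 + s₂ ^ 2) + Real.logb 2 (1 + d₁ ^ 2))) ≤
      (if s₁ ≤ d₁ then Real.logb 2 (1 + s₁ ^ 2)
       else min (Real.logb 2 ((1 + s₂ ^ 2) * (1 + d₁ ^ 2) / ((d₁ ^ 2 / s₁ ^ 2) * s₂ ^ 2 + 1)))
                (Real.logb 2 (1 + d₁ ^ 2 + d₂ ^ 2))) + 1 := by
  have hs₁ : 0 ≤ s₁ := le_trans hs₂ hs
  have hb2 : s₂ ^ 2 ≤ s₁ ^ 2 := by nlinarith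
  by_cases h : s₁ ≤ d₁
  · rw [if_pos h]
    refine le_trans (le_trans (min_le_left _ _) (min_le_left _ _)) ?_
    exact logb_le_add_one' (by positivity) (by positivity) (by nlinarith)
  · rw [if_neg h]
    push_neg at h
    have ha : (0:ℝ) < s₁ ^ 2 := by nlinarith
    have hd1a : d₁ ^ 2 ≤ s₁ ^ 2 := by nlinarith
    -- bound vs second component
    have h2 : min (min (Real.logb 2 (1 + s₁ ^ 2 + s₂ ^ 2))
             (Real.logb 2 (1 + (d₁ + d₂) ^ 2)))
        (min (Real.logb 2 (1 + s₁ ^ 2) + Real.logb 2 (1 + d₂ ^ 2))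
             (Real.logb 2 (1 + s₂ ^ 2) + Real.logb 2 (1 + d₁ ^ 2))) ≤
        Real.logb 2 (1 + d₁ ^ 2 + d₂ ^ 2) + 1 := by
      refine le_trans (le_trans (min_le_left _ _) (min_le_right _ _)) ?_
      exact logb_le_add_one' (by positivity) (by positivity) (by nlinarith [sq_nonneg (d₁ - d₂)])
    -- bound vs first component
    have ht : (0:ℝ) < (d₁ ^ 2 / s₁ ^ 2) * s₂ ^ 2 + 1 := by positivity
    have hP : (0:ℝ) < (1 + s₂ ^ 2) * (1 + d₁ ^ 2) := by positivity
    have hQ : (0:ℝ) < (1 + s₂ ^ 2) * (1 + d₁ ^ 2) / ((d₁ ^ 2 / s₁ ^ 2) * s₂ ^ 2 + 1) :=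
      div_pos hP ht
    have h1 : min (min (Real.logb 2 (1 + s₁ ^ 2 + s₂ ^ 2))
             (Real.logb 2 (1 + (d₁ + d₂) ^ 2)))
        (min (Real.logb 2 (1 + s₁ ^ 2) + Real.logb 2 (1 + d₂ ^ 2))
             (Real.logb 2 (1 + s₂ ^ 2) + Real.logb 2 (1 + d₁ ^ 2))) ≤
        Real.logb 2 ((1 + s₂ ^ 2) * (1 + d₁ ^ 2) / ((d₁ ^ 2 / s₁ ^ 2) * s₂ ^ 2 + 1)) + 1 := by
      by_cases hc : d₁ ^ 2 * s₂ ^ 2 ≤ s₁ ^ 2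
      · -- use cut 4
        have hcut : Real.logb 2 (1 + s₂ ^ 2) + Real.logb 2 (1 + d₁ ^ 2) =
            Real.logb 2 ((1 + s₂ ^ 2) * (1 + d₁ ^ 2)) :=
          (Real.logb_mul (by positivity) (by positivity)).symm
        refine le_trans (le_trans (min_le_right _ _) (min_le_right _ _)) ?_
        rw [hcut]
        refine logb_le_add_one' hP hQ ?_
        rw [mul_div_assoc', le_div_iff₀ ht]
        have hkey : (d₁ ^ 2 / s₁ ^ 2) * s₂ ^ 2 ≤ 1 := by
          rw [div_mul_eq_mul_div, div_le_one ha]; linarith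
        nlinarith
      · -- use cut 1
        push_neg at hc
        refine le_trans (le_trans (min_le_left _ _) (min_le_left _ _)) ?_
        refine logb_le_add_one' (by positivity) hQ ?_
        rw [mul_div_assoc', le_div_iff₀ ht]
        have htid : (d₁ ^ 2 / s₁ ^ 2) * s₂ ^ 2 + 1 = (s₁ ^ 2 + d₁ ^ 2 * s₂ ^ 2) / s₁ ^ 2 := by
          rw [div_mul_eq_mul_div, div_add_one ha.ne', add_comm (d₁ ^ 2 * s₂ ^ 2)]
        rw [htid, mul_div_assoc', div_le_iff₀ ha]
        have key : 0 ≤ 2 * ((1 + s₂ ^ 2) * (1 + d₁ ^ 2)) * s₁ ^ 2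
            - (1 + s₁ ^ 2 + s₂ ^ 2) * (s₁ ^ 2 + d₁ ^ 2 * s₂ ^ 2) := by
          rcases le_or_gt (1 + s₂ ^ 2) (s₁ ^ 2) with h' | h'
          · nlinarith [mul_nonneg (show (0:ℝ) ≤ d₁ ^ 2 * s₂ ^ 2 - s₁ ^ 2 by linarith)
              (show (0:ℝ) ≤ s₁ ^ 2 - 1 - s₂ ^ 2 by linarith),
              mul_nonneg (sq_nonneg s₁) (sq_nonneg d₁)]
          · nlinarith [mul_nonneg ha.le (show (0:ℝ) ≤ 1 + s₂ ^ 2 - s₁ ^ 2 by linarith),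
              mul_nonneg (sq_nonneg d₁) (show (0:ℝ) ≤ 2 * s₁ ^ 2 + s₂ ^ 2 * s₁ ^ 2 - s₂ ^ 2 - s₂ ^ 2 * s₂ ^ 2 by nlinarith),
              mul_nonneg (show (0:ℝ) ≤ d₁ ^ 2 * s₂ ^ 2 - s₁ ^ 2 by linarith)
                (show (0:ℝ) ≤ s₁ ^ 2 by positivity)]
        linarith [key]
    rcases le_total (Real.logb 2 ((1 + s₂ ^ 2) * (1 + d₁ ^ 2) / ((d₁ ^ 2 / s₁ ^ 2) * s₂ ^ 2 + 1)))
        (Real.logb 2 (1 + d₁ ^ 2 + d₂ ^ 2)) with hm | hm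
    · rw [min_eq_left hm]; exact h1
    · rw [min_eq_right hm]; exact h2
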